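/- Let G'(t) = ((3t^4 + 2t^2 + 3)/(8t^4)) * ln|(t+1)/(t-1)| - (3t^2+3)/(4t^3) for t > 0, t ≠ 1. Then G'(t) ≥ 0 for all such t. -/

import Mathlib

noncomputable def Gderiv (t : ℝ) : ℝ :=
  ((3 * t ^ 4 + 2 * t ^ 2 + 3) / (8 * t ^ 4)) * Real.log (|(t + 1) / (t - 1)|)
    - (3 * t ^ 2 + 3) / (4 * t ^ 3)

lemma log_key (x : ℝ) (hx0 : 0 < x) (hx1 : x < 1) :
    2 * x + 2 * x ^ 3 / 3 ≤ Real.log (1 + x) - Real.log (1 - x) := by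
  have habs : |x| < 1 := by rw [abs_of_pos hx0]; exact hx1
  have hs := Real.hasSum_log_sub_log_of_abs_lt_one habs
  have hle := sum_le_hasSum (Finset.range 2)
    (fun i _ => by positivity) hs
  calc 2 * x + 2 * x ^ 3 / 3
      = ∑ k ∈ Finset.range 2, (2 : ℝ) * (1 / (2 * k + 1)) * x ^ (2 * k + 1) := by
        simp [Finset.sum_range_succ]; ring
    _ ≤ _ := hle

lemma log_key' (x : ℝ) (hx0 : 0 < x) (hx1 : x < 1) :
    2 * x + 2 * x ^ 3 / 3 ≤ Real.log ((1 + x) / (1 - x)) := by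
  rw [Real.log_div (by linarith) (by linarith)]
  exact log_key x hx0 hx1

theorem Gderiv_nonneg (t : ℝ) (ht : 0 < t) (ht1 : t ≠ 1) : 0 ≤ Gderiv t := by
  unfold Gderiv
  rcases lt_or_gt_of_ne ht1 with h | h
  · -- 0 < t < 1
    have habs : |(t + 1) / (t - 1)| = (1 + t) / (1 - t) := by
      rw [abs_div, abs_of_pos (by linarith), abs_of_neg (by linarith)]
      ring_nf
    rw [habs]
    have hL := log_key' t ht h
    have hc : (0:ℝ) < (3 * t ^ 4 + 2 * t ^ 2 + 3) / (8 * t ^ 4) := by positivity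
    have h1 : ((3 * t ^ 4 + 2 * t ^ 2 + 3) / (8 * t ^ 4)) * (2 * t + 2 * t ^ 3 / 3)
        ≤ ((3 * t ^ 4 + 2 * t ^ 2 + 3) / (8 * t ^ 4)) * Real.log ((1 + t) / (1 - t)) :=
      mul_le_mul_of_nonneg_left hL hc.le
    have h2 : (3 * t ^ 2 + 3) / (4 * t ^ 3)
        ≤ ((3 * t ^ 4 + 2 * t ^ 2 + 3) / (8 * t ^ 4)) * (2 * t + 2 * t ^ 3 / 3) := by
      rw [div_le_iff₀ (by positivity), div_mul_eq_mul_div, div_mul_eq_mul_div,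
        le_div_iff₀ (by positivity)]
      nlinarith [pow_pos ht 7, pow_pos ht 5, pow_pos ht 3]
    linarith
  · -- t > 1
    set x := 1 / t with hx
    have hx0 : 0 < x := by positivity
    have hx1 : x < 1 := by rw [hx, div_lt_one ht]; exact h
    have habs : |(t + 1) / (t - 1)| = (1 + x) / (1 - x) := by
      rw [abs_of_pos (by apply div_pos <;> linarith)]
      field_simp [hx]
      rw [eq_div_iff (sub_ne_zero.mpr hx1.ne'), hx]
      linear_combination (-2) * mul_one_div_cancel ht.ne'
    rw [habs]
    have hL := log_key' x hx0 hx1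
    have hxt : x = 1 / t := hx
    have hL' : 2 / t + 2 / (3 * t ^ 3) ≤ Real.log ((1 + x) / (1 - x)) := by
      refine le_trans (le_of_eq ?_) hL
      rw [hxt]
      field_simp
    have hc : (0:ℝ) < (3 * t ^ 4 + 2 * t ^ 2 + 3) / (8 * t ^ 4) := by positivity
    have h1 : ((3 * t ^ 4 + 2 * t ^ 2 + 3) / (8 * t ^ 4)) * (2 / t + 2 / (3 * t ^ 3))
        ≤ ((3 * t ^ 4 + 2 * t ^ 2 + 3) / (8 * t ^ 4)) * Real.log ((1 + x) / (1 - x)) :=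
      mul_le_mul_of_nonneg_left hL' hc.le
    have h2 : (3 * t ^ 2 + 3) / (4 * t ^ 3)
        ≤ ((3 * t ^ 4 + 2 * t ^ 2 + 3) / (8 * t ^ 4)) * (2 / t + 2 / (3 * t ^ 3)) := by
      rw [div_le_iff₀ (by positivity)]
      have ht' : t ≠ 0 := ht.ne'
      field_simp
      nlinarith [pow_pos ht 7, pow_pos ht 5, pow_pos ht 3, pow_pos ht 2]
    linarith
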